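/- For a hierarchical Mealy machine Z = (X, T) obtained by composing sub-HiMMs Z_1, …, Z_n under a root machine M, any optimal trajectory of Z from a state s_init contained in Z_i to a state s_goal contained in Z_j with i ≠ j decomposes as: an (exit portion inside Z_i) followed by transitions that, at each visit to a sub-HiMM Z_k with k ∉ {j}, traverse it from its start state to an exit with cost at least c_x^{Z_k} for the exiting input x, followed by a final portion entirely inside Z_j. Consequently, the optimal cost from s_init to s_goal in Z equals the optimal cost in the reduced problem where each intermediate sub-HiMM Z_k is replaced by a single state with exit costs c_x^{Z_k}. -/

import Mathlib

open scoped NNReal ENNReal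

attribute [local instance] Classical.propDecidable

section

variable {S QM I : Type*}

/-- A trajectory of the flat (leaf-state) semantics of a hierarchical machine. -/
def IsTraj (ψ : S → I → Option S) (z : List (S × I)) : Prop :=
  List.Chain' (fun a b => ψ a.1 a.2 = some b.1) z

/-- Cumulative cost of a trajectory (costs valued in `ℝ≥0∞`). -/
noncomputable def tcost (χ : S → I → ℝ≥0∞) (z : List (S × I)) : ℝ≥0∞ :=
  (z.map fun p => χ p.1 p.2).sum

/-- A trajectory connecting leaf state `a` to leaf state `b`. -/
def ConnectsFrom (ψ : S → I → Option S) (a b : S) (z : List (S × I)) : Prop :=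
  IsTraj ψ z ∧ z ≠ [] ∧ (∀ p ∈ z.head?, p.1 = a) ∧ (∀ p ∈ z.getLast?, ψ p.1 p.2 = some b)

/-- Optimal (minimal) cumulative cost over all trajectories from `a` to `b`. -/
noncomputable def optCost (ψ : S → I → Option S) (χ : S → I → ℝ≥0∞) (a b : S) : ℝ≥0∞ :=
  ⨅ z : {z : List (S × I) // ConnectsFrom ψ a b z}, tcost χ z.1

/-- The optimal exit cost `c_x^{Z_k}` of the sub-HiMM sitting at root state `k`:
the minimal cost of a trajectory starting at `start(Z_k)`, remaining inside `Z_k`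
(the block `{s | part s = k}`), and exiting with input `x` (the final, exiting
transition's cost is excluded). -/
noncomputable def cExit (ψ : S → I → Option S) (χ : S → I → ℝ≥0∞)
    (part : S → QM) (st : QM → S) (k : QM) (x : I) : ℝ≥0∞ :=
  ⨅ z : {z : List (S × I) // IsTraj ψ z ∧ (∀ p ∈ z.head?, p.1 = st k) ∧
      (∀ p ∈ z, part p.1 = k) ∧
      ∃ p ∈ z.getLast?, p.2 = x ∧ ∃ t, ψ p.1 p.2 = some t ∧ part t ≠ k},
    (z.1.dropLast.map fun p => χ p.1 p.2).sum

/-- The transition function of the reduced problem: each collapsed sub-HiMM `Z_k` is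
replaced by the single state `st k`, from which an input `x` moves (as the root
machine `δM` prescribes) to the entry state of the next block; on all non-collapsed
blocks the original flat dynamics `ψ` is kept. -/
noncomputable def psiRed (ψ : S → I → Option S) (part : S → QM) (st : QM → S)
    (δM : QM → I → Option QM) (collapsed : QM → Prop) (s : S) (x : I) : Option S :=
  if collapsed (part s) then
    (if s = st (part s) then (δM (part s) x).map st else none)
  else ψ s x

/-- The cost function of the reduced problem: traversing a collapsed sub-HiMM `Z_k`
with exiting input `x` costs its optimal exit cost `c_x^{Z_k}` plus the cost
`γM(k, x)` of the exiting transition of the root machine; elsewhere costs are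
unchanged. -/
noncomputable def chiRed (ψ : S → I → Option S) (χ : S → I → ℝ≥0∞) (part : S → QM)
    (st : QM → S) (γM : QM → I → ℝ≥0) (collapsed : QM → Prop) (s : S) (x : I) : ℝ≥0∞ :=
  if collapsed (part s) then cExit ψ χ part st (part s) x + (γM (part s) x : ℝ≥0∞)
  else χ s x


/-! ### Auxiliary lemmas -/

theorem getLast?_cons_of_ne_nil {α : Type*} (e : α) {l : List α} (h : l ≠ []) :
    (e :: l).getLast? = l.getLast? := by
  obtain ⟨b, L, rfl⟩ := List.exists_cons_of_ne_nil h
  exact List.getLast?_cons_cons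

theorem tcost_append (χ : S → I → ℝ≥0∞) (u v : List (S × I)) :
    tcost χ (u ++ v) = tcost χ u + tcost χ v := by
  simp [tcost]

theorem connectsFrom_append {ψ : S → I → Option S} {a b c : S} {u v : List (S × I)}
    (hu : ConnectsFrom ψ a b u) (hv : ConnectsFrom ψ b c v) :
    ConnectsFrom ψ a c (u ++ v) := by
  obtain ⟨tu, hu0, huh, hul⟩ := hu
  obtain ⟨tv, hv0, hvh, hvl⟩ := hv
  refine ⟨?_, by simp [hu0], ?_, ?_⟩
  · rw [IsTraj]; refine List.isChain_append.mpr ?_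
    exact ⟨tu, tv, fun x hx y hy => by rw [hul x hx, hvh y hy]⟩
  · intro p hp
    obtain ⟨e, L, rfl⟩ := List.exists_cons_of_ne_nil hu0
    exact huh p hp
  · intro p hp
    rw [List.getLast?_append, List.getLast?_eq_getLast hv0] at hp
    have hp' : v.getLast hv0 = p := by simpa using hp
    exact hp' ▸ hvl (v.getLast hv0) (by rw [List.getLast?_eq_getLast hv0]; rfl)

theorem optCost_le_tcost {ψ : S → I → Option S} {χ : S → I → ℝ≥0∞} {a b : S}
    {z : List (S × I)} (h : ConnectsFrom ψ a b z) :
    optCost ψ χ a b ≤ tcost χ z :=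
  iInf_le _ (⟨z, h⟩ : {z : List (S × I) // ConnectsFrom ψ a b z})

theorem optCost_triangle (ψ : S → I → Option S) (χ : S → I → ℝ≥0∞) (a b c : S) :
    optCost ψ χ a c ≤ optCost ψ χ a b + optCost ψ χ b c := by
  have h : optCost ψ χ a b + optCost ψ χ b c
      = ⨅ u : {z : List (S × I) // ConnectsFrom ψ a b z},
        ⨅ v : {z : List (S × I) // ConnectsFrom ψ b c z},
          (tcost χ u.1 + tcost χ v.1) := by
    rw [optCost, ENNReal.iInf_add]
    exact iInf_congr fun u => by rw [optCost, ENNReal.add_iInf]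
  rw [h]
  exact le_iInf fun u => le_iInf fun v =>
    le_trans (optCost_le_tcost (connectsFrom_append u.2 v.2))
      (le_of_eq (tcost_append χ u.1 v.1))

theorem connectsFrom_singleton {ψ : S → I → Option S} {s t : S} {x : I}
    (h : ψ s x = some t) : ConnectsFrom ψ s t [(s, x)] := by
  refine ⟨List.isChain_singleton _, by simp, ?_, ?_⟩ <;>
    · intro p hp
      simp only [List.head?_cons, List.getLast?_singleton, Option.mem_some_iff] at hp
      subst hp
      first | rfl | exact h

theorem step_bound {ψ : S → I → Option S} {χE : S → I → ℝ≥0∞} {part : S → QM} {st : QM → S}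
    {δM : QM → I → Option QM} {γM : QM → I → ℝ≥0} {collapsed : QM → Prop}
    (hpart : ∀ q, part (st q) = q)
    (hcross : ∀ s x t, ψ s x = some t → part t ≠ part s →
      δM (part s) x = some (part t) ∧ t = st (part t) ∧ χE s x = (γM (part s) x : ℝ≥0∞))
    {s t : S} {x : I} (h : psiRed ψ part st δM collapsed s x = some t) :
    optCost ψ χE s t ≤ chiRed ψ χE part st γM collapsed s x := by
  by_cases hc : collapsed (part s)
  · rw [psiRed, if_pos hc] at h
    rw [chiRed, if_pos hc]
    by_cases hs : s = st (part s)
    · rw [if_pos hs, Option.map_eq_some_iff] at h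
      obtain ⟨q, hq, ht⟩ := h
      by_cases hfin : cExit ψ χE part st (part s) x = ⊤
      · rw [hfin, top_add]
        exact le_top
      refine ENNReal.le_of_forall_pos_le_add fun ε hε _ => ?_
      have hlt : cExit ψ χE part st (part s) x
          < cExit ψ χE part st (part s) x + (ε : ℝ≥0∞) :=
        ENNReal.lt_add_right hfin (by exact_mod_cast hε.ne')
      obtain ⟨w, hw⟩ := iInf_lt_iff.mp hlt
      obtain ⟨htw, hhw, hmemw, p, hpl, hpx, t', ht', hpt'⟩ := w.2
      have hwne : w.1 ≠ [] := by
        intro h0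
        rw [h0] at hpl
        simp at hpl
      have hpk : part p.1 = part s := hmemw p (by
        rw [List.getLast?_eq_getLast hwne] at hpl
        exact (Option.mem_some_iff.mp hpl) ▸ List.getLast_mem hwne)
      have hcr := hcross p.1 p.2 t' ht' (by rw [hpk]; exact hpt')
      obtain ⟨hδ, hst', hχγ⟩ := hcr
      rw [hpk, hpx] at hδ
      rw [hδ] at hq
      have hqq : q = part t' := by exact (Option.some_inj.mp hq).symm
      have htt' : t = t' := by rw [← ht, hqq, ← hst']
      have hpeq : ∀ r ∈ (w.1).getLast?, r = p := by
        intro r hr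
        rw [List.getLast?_eq_getLast hwne] at hr hpl
        rw [← Option.mem_some_iff.mp hpl, ← Option.mem_some_iff.mp hr]
      have hconn : ConnectsFrom ψ s t w.1 := by
        refine ⟨htw, hwne, fun r hr => (hhw r hr).trans hs.symm, fun r hr => ?_⟩
        rw [hpeq r hr, ht', htt']
      have hcost : tcost χE w.1
          = (List.map (fun p => χE p.1 p.2) (w.1).dropLast).sum + χE p.1 p.2 := by
        conv_lhs => rw [← List.dropLast_append_getLast hwne]
        rw [tcost_append]
        have : w.1.getLast hwne = p := by
          rw [List.getLast?_eq_getLast hwne] at hpl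
          exact (Option.mem_some_iff.mp hpl)
        simp [tcost, this]
      calc optCost ψ χE s t ≤ tcost χE w.1 := optCost_le_tcost hconn
        _ = (List.map (fun p => χE p.1 p.2) (w.1).dropLast).sum + χE p.1 p.2 := hcost
        _ ≤ (cExit ψ χE part st (part s) x + (ε : ℝ≥0∞)) + χE p.1 p.2 :=
            add_le_add_left hw.le _
        _ = (cExit ψ χE part st (part s) x + (γM (part s) x : ℝ≥0∞)) + (ε : ℝ≥0∞) := by
            rw [hχγ, hpk, hpx]; ring
    · rw [if_neg hs] at h
      exact absurd h (by simp)
  · rw [psiRed, if_neg hc] at h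
    rw [chiRed, if_neg hc]
    exact le_trans (optCost_le_tcost (connectsFrom_singleton h)) (by simp [tcost])

theorem claimA {ψ : S → I → Option S} {χE : S → I → ℝ≥0∞} {part : S → QM} {st : QM → S}
    {δM : QM → I → Option QM} {γM : QM → I → ℝ≥0} {collapsed : QM → Prop}
    (hpart : ∀ q, part (st q) = q)
    (hcross : ∀ s x t, ψ s x = some t → part t ≠ part s →
      δM (part s) x = some (part t) ∧ t = st (part t) ∧ χE s x = (γM (part s) x : ℝ≥0∞)) :
    ∀ (z : List (S × I)) (a b : S),
      ConnectsFrom (psiRed ψ part st δM collapsed) a b z →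
      optCost ψ χE a b ≤ tcost (chiRed ψ χE part st γM collapsed) z := by
  intro z
  induction z with
  | nil => exact fun a b h => absurd rfl h.2.1
  | cons p tl ih =>
    intro a b h
    obtain ⟨htr, -, hh, hl⟩ := h
    have hpa : p.1 = a := hh p rfl
    cases tl with
    | nil =>
      have hstep : psiRed ψ part st δM collapsed p.1 p.2 = some b := hl p rfl
      calc optCost ψ χE a b ≤ chiRed ψ χE part st γM collapsed p.1 p.2 :=
            hpa ▸ step_bound hpart hcross hstep
        _ = tcost (chiRed ψ χE part st γM collapsed) [p] := by simp [tcost]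
    | cons q tl' =>
      have hstep : psiRed ψ part st δM collapsed p.1 p.2 = some q.1 :=
        (List.isChain_cons.mp htr).1 q rfl
      have hconn' : ConnectsFrom (psiRed ψ part st δM collapsed) q.1 b (q :: tl') := by
        refine ⟨(List.isChain_cons.mp htr).2, by simp, fun r hr => ?_, fun r hr => ?_⟩
        · simp only [List.head?_cons, Option.mem_some_iff] at hr
          rw [← hr]
        · exact hl r (by rw [List.getLast?_cons_cons]; exact hr)
      calc optCost ψ χE a b ≤ optCost ψ χE a q.1 + optCost ψ χE q.1 b :=
            optCost_triangle ψ χE a q.1 b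
        _ ≤ chiRed ψ χE part st γM collapsed p.1 p.2
            + tcost (chiRed ψ χE part st γM collapsed) (q :: tl') :=
            add_le_add (hpa ▸ step_bound hpart hcross hstep) (ih q.1 b hconn')
        _ = tcost (chiRed ψ χE part st γM collapsed) (p :: q :: tl') := by
            simp [tcost]

theorem claimB {ψ : S → I → Option S} {χE : S → I → ℝ≥0∞} {part : S → QM} {st : QM → S}
    {δM : QM → I → Option QM} {γM : QM → I → ℝ≥0} {collapsed : QM → Prop} {b : S}
    (hpart : ∀ q, part (st q) = q)
    (hcross : ∀ s x t, ψ s x = some t → part t ≠ part s →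
      δM (part s) x = some (part t) ∧ t = st (part t) ∧ χE s x = (γM (part s) x : ℝ≥0∞))
    (hgoal : ∀ k, collapsed k → part b ≠ k) :
    ∀ (n : ℕ) (z : List (S × I)), z.length ≤ n → ∀ a, ConnectsFrom ψ a b z →
      (collapsed (part a) → a = st (part a)) →
      ∃ w, ConnectsFrom (psiRed ψ part st δM collapsed) a b w ∧
        tcost (chiRed ψ χE part st γM collapsed) w ≤ tcost χE z := by
  intro n
  induction n with
  | zero =>
    intro z hlen a hz _
    exact absurd (List.eq_nil_of_length_eq_zero (Nat.le_zero.mp hlen)) hz.2.1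
  | succ n ih =>
    intro z hlen a hz hst
    obtain ⟨htr, hne, hh, hl⟩ := hz
    obtain ⟨p, tl, rfl⟩ := List.exists_cons_of_ne_nil hne
    have hpa : p.1 = a := hh p rfl
    by_cases hc : collapsed (part a)
    · -- collapsed case
      have ha : a = st (part a) := hst hc
      set k := part a with hk
      have hpk : (fun r : S × I => decide (part r.1 = k)) p = true := by simp [hpa, hk]
      set run := (p :: tl).takeWhile (fun r => decide (part r.1 = k)) with hrun
      set rest := (p :: tl).dropWhile (fun r => decide (part r.1 = k)) with hrest
      have hsplit : run ++ rest = p :: tl := List.takeWhile_append_dropWhile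
      have hruncons : run = p :: tl.takeWhile (fun r => decide (part r.1 = k)) := by
        rw [hrun,
          List.takeWhile_cons_of_pos (p := fun r : S × I => decide (part r.1 = k))
            (a := p) (l := tl) hpk]
      have hrestdrop : rest = tl.dropWhile (fun r => decide (part r.1 = k)) := by
        rw [hrest,
          List.dropWhile_cons_of_pos (p := fun r : S × I => decide (part r.1 = k))
            (a := p) (l := tl) hpk]
      have hrun_ne : run ≠ [] := by rw [hruncons]; simp
      have hrunmem : ∀ r ∈ run, part r.1 = k := by
        intro r hr
        rw [hrun] at hr
        simpa using List.mem_takeWhile_imp hr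
      have hchain : List.Chain' (fun a b : S × I => ψ a.1 a.2 = some b.1) (run ++ rest) := by
        rw [hsplit]; exact htr
      obtain ⟨htrun, htrest, hconnrr⟩ := List.isChain_append.mp hchain
      set lastr := run.getLast hrun_ne with hlastr
      have hlastk : part lastr.1 = k := hrunmem _ (List.getLast_mem hrun_ne)
      have hheadrun : ∀ r ∈ run.head?, r.1 = st k := by
        rw [hruncons]
        intro r hr
        simp only [List.head?_cons, Option.mem_some_iff] at hr
        rw [← hr, hpa, ha]
      cases hre : rest with
      | nil =>
        have hzrun : run = p :: tl := by rw [← hsplit, hre, List.append_nil]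
        have hlast_z : (p :: tl).getLast? = some lastr := by
          rw [← hzrun, List.getLast?_eq_getLast hrun_ne]
        have hexit : ψ lastr.1 lastr.2 = some b := hl lastr (by rw [hlast_z]; rfl)
        have hbk : part b ≠ k := hgoal k hc
        obtain ⟨hδ, hbst, hχγ⟩ := hcross lastr.1 lastr.2 b hexit (by rw [hlastk]; exact hbk)
        rw [hlastk] at hδ hχγ
        have hce : cExit ψ χE part st k lastr.2
            ≤ (run.dropLast.map fun r => χE r.1 r.2).sum :=
          by rw [cExit]; exact iInf_le_of_le ⟨run, htrun, hheadrun, hrunmem, lastr,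
            (by rw [List.getLast?_eq_getLast hrun_ne]; rfl), rfl, b, hexit, hbk⟩ le_rfl
        have hrun_cost : tcost χE run
            = (run.dropLast.map fun r => χE r.1 r.2).sum + χE lastr.1 lastr.2 := by
          conv_lhs => rw [← List.dropLast_append_getLast hrun_ne]
          rw [tcost_append]
          simp [tcost, hlastr]
        refine ⟨[(st k, lastr.2)], ⟨List.isChain_singleton _, by simp, ?_, ?_⟩, ?_⟩
        · intro r hr
          simp only [List.head?_cons, Option.mem_some_iff] at hr
          rw [← hr, ha]
        · intro r hr
          simp only [List.getLast?_singleton, Option.mem_some_iff] at hr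
          rw [← hr]
          simp only [psiRed, hpart, if_pos hc]
          rw [if_pos trivial, hδ, Option.map_some, ← hbst]
        · have h1 : tcost (chiRed ψ χE part st γM collapsed) [(st k, lastr.2)]
              = cExit ψ χE part st k lastr.2 + (γM k lastr.2 : ℝ≥0∞) := by
            simp only [tcost, List.map_cons, List.map_nil, List.sum_cons, List.sum_nil,
              add_zero, chiRed, hpart, if_pos hc]
          rw [h1, ← hzrun, hrun_cost, hχγ]
          exact add_le_add_left hce _
      | cons q rest' =>
        have hrne : rest ≠ [] := by rw [hre]; simp
        have hqnk : part q.1 ≠ k := by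
          have hw : (p :: tl).dropWhile (fun r => decide (part r.1 = k)) ≠ [] :=
            hrest ▸ hrne
          have h2 := List.head_dropWhile_not (fun r : S × I => decide (part r.1 = k)) (l := p :: tl) hw
          have h4 : ((p :: tl).dropWhile (fun r => decide (part r.1 = k))).head? = some q := by
            rw [← hrest, hre]; rfl
          have h3 := List.head?_eq_head hw
          rw [h4] at h3
          rw [← Option.some_inj.mp h3] at h2
          simpa using h2
        have hexit : ψ lastr.1 lastr.2 = some q.1 :=
          hconnrr lastr (by rw [List.getLast?_eq_getLast hrun_ne]; rfl) q
            (by rw [hre]; rfl)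
        obtain ⟨hδ, hqst, hχγ⟩ := hcross lastr.1 lastr.2 q.1 hexit (by rw [hlastk]; exact hqnk)
        rw [hlastk] at hδ hχγ
        have hlenrest : rest.length ≤ n := by
          have h1 : rest.length ≤ tl.length :=
            hrestdrop ▸ (List.dropWhile_suffix _).length_le
          have h2 : (p :: tl).length ≤ n + 1 := hlen
          simp only [List.length_cons] at h2
          omega
        have hconnrest : ConnectsFrom ψ q.1 b rest := by
          refine ⟨htrest, hrne, ?_, ?_⟩
          · intro r hr
            rw [hre] at hr
            simp only [List.head?_cons, Option.mem_some_iff] at hr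
            rw [← hr]
          · intro r hr
            apply hl r
            have heq : (p :: tl).getLast? = rest.getLast? := by
              rw [← hsplit, List.getLast?_append, List.getLast?_eq_getLast hrne]
              rfl
            rw [heq]
            exact hr
        obtain ⟨w', hw'c, hw'cost⟩ := ih rest hlenrest q.1 hconnrest (fun _ => hqst)
        obtain ⟨hw'tr, hw'ne, hw'h, hw'l⟩ := hw'c
        have hpsistep : psiRed ψ part st δM collapsed (st k) lastr.2 = some q.1 := by
          simp only [psiRed, hpart, if_pos hc]
          rw [if_pos trivial, hδ, Option.map_some, ← hqst]
        refine ⟨(st k, lastr.2) :: w', ⟨?_, by simp, ?_, ?_⟩, ?_⟩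
        · rw [IsTraj]; refine List.isChain_cons.mpr ?_
          refine ⟨fun y hy => ?_, hw'tr⟩
          rw [hpsistep, hw'h y hy]
        · intro r hr
          simp only [List.head?_cons, Option.mem_some_iff] at hr
          rw [← hr, ha]
        · intro r hr
          exact hw'l r (by rwa [getLast?_cons_of_ne_nil _ hw'ne] at hr)
        · have hce : cExit ψ χE part st k lastr.2
              ≤ (run.dropLast.map fun r => χE r.1 r.2).sum :=
            by rw [cExit]; exact iInf_le_of_le ⟨run, htrun, hheadrun, hrunmem, lastr,
              (by rw [List.getLast?_eq_getLast hrun_ne]; rfl), rfl, q.1, hexit, hqnk⟩ le_rfl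
          have hrun_cost : tcost χE run
              = (run.dropLast.map fun r => χE r.1 r.2).sum + χE lastr.1 lastr.2 := by
            conv_lhs => rw [← List.dropLast_append_getLast hrun_ne]
            rw [tcost_append]
            simp [tcost, hlastr]
          have hto : tcost (chiRed ψ χE part st γM collapsed) ((st k, lastr.2) :: w')
              = (cExit ψ χE part st k lastr.2 + (γM k lastr.2 : ℝ≥0∞))
                + tcost (chiRed ψ χE part st γM collapsed) w' := by
            simp only [tcost, List.map_cons, List.sum_cons, chiRed, hpart, if_pos hc]
          have hz_cost : tcost χE (p :: tl) = tcost χE run + tcost χE rest := by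
            rw [← hsplit, tcost_append]
          rw [hto, hz_cost]
          refine add_le_add ?_ hw'cost
          rw [hrun_cost, hχγ]
          exact add_le_add_left hce _
    · -- non-collapsed case
      cases tl with
      | nil =>
        have hb : ψ p.1 p.2 = some b := hl p rfl
        refine ⟨[p], ⟨List.isChain_singleton _, by simp, ?_, ?_⟩, ?_⟩
        · intro r hr
          simp only [List.head?_cons, Option.mem_some_iff] at hr
          rw [← hr, hpa]
        · intro r hr
          simp only [List.getLast?_singleton, Option.mem_some_iff] at hr
          rw [← hr, psiRed, if_neg (by rw [hpa]; exact hc)]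
          exact hb
        · simp only [tcost, List.map_cons, List.map_nil, List.sum_cons, List.sum_nil,
            add_zero, chiRed, if_neg (show ¬ collapsed (part p.1) by rw [hpa]; exact hc)]
          exact le_refl _
      | cons q tl' =>
        have hstep : ψ p.1 p.2 = some q.1 := (List.isChain_cons.mp htr).1 q rfl
        have hstq : collapsed (part q.1) → q.1 = st (part q.1) := by
          intro hcq
          by_cases hqe : part q.1 = part p.1
          · rw [hqe, hpa] at hcq
            exact absurd hcq hc
          · exact (hcross p.1 p.2 q.1 hstep hqe).2.1
        have hconn' : ConnectsFrom ψ q.1 b (q :: tl') := by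
          refine ⟨(List.isChain_cons.mp htr).2, by simp, ?_, ?_⟩
          · intro r hr
            simp only [List.head?_cons, Option.mem_some_iff] at hr
            rw [← hr]
          · intro r hr
            exact hl r (by rw [List.getLast?_cons_cons]; exact hr)
        obtain ⟨w', hw'c, hw'cost⟩ := ih (q :: tl')
          (by simp only [List.length_cons] at hlen ⊢; omega) q.1 hconn' hstq
        obtain ⟨hw'tr, hw'ne, hw'h, hw'l⟩ := hw'c
        refine ⟨p :: w', ⟨?_, by simp, ?_, ?_⟩, ?_⟩
        · rw [IsTraj]; refine List.isChain_cons.mpr ?_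
          refine ⟨fun y hy => ?_, hw'tr⟩
          rw [psiRed, if_neg (by rw [hpa]; exact hc), hstep, hw'h y hy]
        · intro r hr
          simp only [List.head?_cons, Option.mem_some_iff] at hr
          rw [← hr, hpa]
        · intro r hr
          exact hw'l r (by rwa [getLast?_cons_of_ne_nil _ hw'ne] at hr)
        · have h1 : tcost (chiRed ψ χE part st γM collapsed) (p :: w')
              = chiRed ψ χE part st γM collapsed p.1 p.2
                + tcost (chiRed ψ χE part st γM collapsed) w' := by
            simp [tcost]
          have h2 : tcost χE (p :: q :: tl') = χE p.1 p.2 + tcost χE (q :: tl') := by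
            simp [tcost]
          rw [h1, h2, chiRed, if_neg (show ¬ collapsed (part p.1) by rw [hpa]; exact hc)]
          exact add_le_add le_rfl hw'cost
/-- Let Z be a hierarchical Mealy machine obtained by composing
sub-HiMMs under a root machine M (root states `QM`, root dynamics `δM`, `γM`; each
leaf state `s` lies in the block `part s`, entering a block happens at its start
state `st (part s)`, and crossing transitions follow the root machine and cost
`γM`).  For `s_init` contained in Z_i and `s_goal` contained in Z_j with i ≠ j:

(1) every optimal trajectory of Z from `s_init` to `s_goal` decomposes so that each
maximal portion inside an intermediate (collapsed) sub-HiMM Z_k enters at the start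
state `st k` and traverses Z_k to an exit with cost at least `c_x^{Z_k}` for the
exiting input `x`; and

(2) consequently, the optimal cost from `s_init` to `s_goal` in Z equals the optimal
cost in the reduced problem in which each intermediate sub-HiMM Z_k is replaced by a
single state with exit costs `c_x^{Z_k}`. -/
theorem stmt18 (ψ : S → I → Option S) (χ : S → I → ℝ≥0)
    (part : S → QM) (st : QM → S) (IsSub : QM → Prop)
    (δM : QM → I → Option QM) (γM : QM → I → ℝ≥0)
    (hpart : ∀ q, part (st q) = q)
    (hplain : ∀ s, ¬ IsSub (part s) → s = st (part s))
    (hcross : ∀ s x t, ψ s x = some t → part t ≠ part s →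
      δM (part s) x = some (part t) ∧ t = st (part t) ∧ χ s x = γM (part s) x)
    (sInit sGoal : S)
    (hij : part sInit ≠ part sGoal)
    (hsubI : IsSub (part sInit)) (hsubJ : IsSub (part sGoal)) :
    -- the collapsed (intermediate) sub-HiMMs and the `ℝ≥0∞`-valued flat cost
    let collapsed : QM → Prop := fun q => IsSub q ∧ q ≠ part sInit ∧ q ≠ part sGoal
    let χE : S → I → ℝ≥0∞ := fun s x => (χ s x : ℝ≥0∞)
    -- (1) decomposition of optimal trajectories
    (∀ z, ConnectsFrom ψ sInit sGoal z → tcost χE z = optCost ψ χE sInit sGoal →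
      ∀ k, collapsed k → ∀ a b : ℕ, 0 < a → a ≤ b → b < z.length →
        (∀ idx, a ≤ idx → idx ≤ b → ∀ p ∈ z[idx]?, part p.1 = k) →
        (∀ p ∈ z[a-1]?, part p.1 ≠ k) →
        (∀ p ∈ z[b+1]?, part p.1 ≠ k) →
        (∀ p ∈ z[a]?, p.1 = st k) ∧
        (∀ p ∈ z[b]?, cExit ψ χE part st k p.2 ≤
          (((z.drop a).take (b - a)).map fun r => χE r.1 r.2).sum)) ∧
    -- (2) the optimal cost equals the optimal cost of the reduced problem
    optCost ψ χE sInit sGoal =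
      optCost (psiRed ψ part st δM collapsed) (chiRed ψ χE part st γM collapsed)
        sInit sGoal := by
  intro collapsed χE
  have hcrossE : ∀ s x t, ψ s x = some t → part t ≠ part s →
      δM (part s) x = some (part t) ∧ t = st (part t) ∧ χE s x = (γM (part s) x : ℝ≥0∞) := by
    intro s x t h1 h2
    obtain ⟨ha, hb, hc⟩ := hcross s x t h1 h2
    refine ⟨ha, hb, ?_⟩
    show (χ s x : ℝ≥0∞) = (γM (part s) x : ℝ≥0∞)
    exact_mod_cast hc
  refine ⟨?_, ?_⟩
  · -- Part (1)
    intro z hconn _ k hk a b ha0 hab hblt hin hprev hnext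
    obtain ⟨htr, hne, hh, hl⟩ := hconn
    have halen : a < z.length := lt_of_le_of_lt hab hblt
    have ham1 : a - 1 < z.length := lt_of_lt_of_le (Nat.sub_lt ha0 one_pos) halen.le
    have hchain : ∀ i, ∀ _ : i + 1 < z.length,
        ψ (z[i]'(by omega)).1 (z[i]'(by omega)).2 = some ((z[i+1]'(by assumption)).1) := by
      intro i hi
      have h2 := List.isChain_iff_getElem.mp htr i (by omega)
      simpa [List.get_eq_getElem] using h2
    have hprev' : part (z[a-1]'ham1).1 ≠ k :=
      hprev _ (by rw [List.getElem?_eq_getElem ham1]; rfl)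
    have hin' : ∀ i, ∀ _ : i < z.length, a ≤ i → i ≤ b → part (z[i]'(by assumption)).1 = k :=
      fun i h h1 h2 => hin i h1 h2 _ (by rw [List.getElem?_eq_getElem h]; rfl)
    have hstep_a : ψ (z[a-1]'ham1).1 (z[a-1]'ham1).2 = some ((z[a]'halen).1) := by
      have h := hchain (a-1) (by omega)
      simpa [show a - 1 + 1 = a from by omega] using h
    have hga : (z[a]'halen).1 = st k := by
      have hka : part (z[a]'halen).1 = k := hin' a halen le_rfl hab
      have hcr := hcross _ _ _ hstep_a (by rw [hka]; exact fun h => hprev' h.symm)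
      rw [hcr.2.1, hka]
    have goal1 : ∀ p ∈ z[a]?, p.1 = st k := by
      intro p hp
      rw [List.getElem?_eq_getElem halen] at hp
      rw [← Option.mem_some_iff.mp hp]
      exact hga
    refine ⟨goal1, ?_⟩
    intro p hp
    rw [List.getElem?_eq_getElem hblt] at hp
    have hpz : p = z[b]'hblt := (Option.mem_some_iff.mp hp).symm
    set w : List (S × I) := (z.drop a).take (b - a + 1) with hw
    have hwlen : w.length = b - a + 1 := by
      rw [hw, List.length_take, List.length_drop]
      omega
    have hwget : ∀ i, ∀ _ : i < w.length, w[i]'(by assumption) = z[a+i]'(by omega) := by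
      intro i hi
      simp only [hw, List.getElem_take, List.getElem_drop]
    have htrajw : IsTraj ψ w := by
      rw [IsTraj]; refine List.isChain_iff_getElem.mpr ?_
      intro i hi
      rw [hwlen] at hi
      have hi1 : i < w.length := by rw [hwlen]; omega
      have hi2 : i + 1 < w.length := by rw [hwlen]; omega
      rw [hwget i hi1, hwget (i+1) hi2]
      have h := hchain (a+i) (by omega)
      simpa [show a + (i+1) = a + i + 1 from by omega] using h
    have hwne : w ≠ [] := by
      intro h0
      rw [h0] at hwlen
      simp at hwlen
    have hheadw : ∀ r ∈ w.head?, r.1 = st k := by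
      intro r hr
      have h0 : 0 < w.length := by omega
      rw [List.head?_eq_getElem?, List.getElem?_eq_getElem h0] at hr
      rw [← Option.mem_some_iff.mp hr]
      have := hwget 0 h0
      simp only [Nat.add_zero] at this
      rw [this]
      exact hga
    have hmemw : ∀ r ∈ w, part r.1 = k := by
      intro r hr
      obtain ⟨i, hi, rfl⟩ := List.mem_iff_getElem.mp hr
      rw [hwget i hi]
      exact hin' (a+i) (by rw [hwlen] at hi; omega) (by omega) (by rw [hwlen] at hi; omega)
    have hlastw : w.getLast? = some (z[b]'hblt) := by
      have hba : b - a < w.length := by omega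
      rw [List.getLast?_eq_getElem?, hwlen, show b - a + 1 - 1 = b - a from by omega,
        List.getElem?_eq_getElem hba, hwget (b-a) hba]
      simp only [show a + (b - a) = b from by omega]
    have hexit : ∃ t, ψ (z[b]'hblt).1 (z[b]'hblt).2 = some t ∧ part t ≠ k := by
      by_cases hb1 : b + 1 < z.length
      · refine ⟨(z[b+1]'hb1).1, hchain b hb1, ?_⟩
        exact hnext _ (by rw [List.getElem?_eq_getElem hb1]; rfl)
      · have hbl : z.length - 1 = b := by omega
        have hlz : z.getLast? = some (z[b]'hblt) := by
          rw [List.getLast?_eq_getElem?]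
          simp only [hbl]
          exact List.getElem?_eq_getElem hblt
        refine ⟨sGoal, hl _ (by rw [hlz]; rfl), ?_⟩
        exact fun h => hk.2.2 h.symm
    obtain ⟨t, ht, hnk⟩ := hexit
    have hdl : w.dropLast = (z.drop a).take (b - a) := by
      rw [List.dropLast_eq_take, hwlen, show b - a + 1 - 1 = b - a from by omega, hw,
        List.take_take]
      congr 1
      omega
    have hbound := iInf_le
      (fun zz : {zl : List (S × I) // IsTraj ψ zl ∧ (∀ r ∈ zl.head?, r.1 = st k) ∧
        (∀ r ∈ zl, part r.1 = k) ∧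
        ∃ r ∈ zl.getLast?, r.2 = p.2 ∧ ∃ t, ψ r.1 r.2 = some t ∧ part t ≠ k} =>
        (zz.1.dropLast.map fun r => χE r.1 r.2).sum)
      ⟨w, htrajw, hheadw, hmemw, z[b]'hblt, (by rw [hlastw]; rfl),
        (by rw [hpz]), t, ht, hnk⟩
    rw [cExit]
    exact le_trans hbound (le_of_eq (by rw [hdl]))
  · -- Part (2)
    have hgoalB : ∀ k, collapsed k → part sGoal ≠ k := fun k hk h => hk.2.2 h.symm
    refine le_antisymm ?_ ?_
    · exact le_iInf fun zc => claimA hpart hcrossE zc.1 sInit sGoal zc.2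
    · refine le_iInf fun zc => ?_
      obtain ⟨w, hwc, hwcost⟩ := claimB hpart hcrossE hgoalB zc.1.length zc.1 le_rfl sInit
        zc.2 (fun h => absurd rfl h.2.1)
      exact le_trans (optCost_le_tcost hwc) hwcost

end
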